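/- For every natural number n, the number of binary strings of length exactly n that are prefixes of some element of 𝕊 (the class of subsets of S = {0^{2^k} : k ∈ ℕ}, viewed as infinite binary sequences under the length-lexicographic identification of strings with positions) is at most n + 1. -/

import Mathlib

/-- Positions (under the length-lexicographic identification of binary strings
with natural numbers) of the strings `0^{2^k}`: the string `0^l` is the
`(2^l - 1)`-th string. -/
def sparsePos : Set ℕ := {x | ∃ k : ℕ, x = 2 ^ (2 ^ k) - 1}

/-- The class `𝕊` of subsets of `S = {0^{2^k} : k ∈ ℕ}`, viewed as infinite
binary sequences. -/
def SparseSeq : Set (ℕ → Bool) := {X | ∀ m, X m = true → m ∈ sparsePos}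

lemma k_lt_pos (k : ℕ) : k < 2 ^ (2 ^ k) - 1 := by
  have h1 : k < 2 ^ k := Nat.lt_two_pow_self
  have h2 : 2 ^ k < 2 ^ (2 ^ k) := Nat.lt_two_pow_self
  omega

/-- For every `n`, there are at most `n + 1` binary strings of length `n` that
are prefixes of some element of `𝕊`. -/
theorem card_prefixes_sparse_le (n : ℕ) :
    Set.ncard {l : List Bool | l.length = n ∧
      ∃ X ∈ SparseSeq, ∀ i, (h : i < l.length) → X i = l.get ⟨i, h⟩}
      ≤ n + 1 := by
  set F : Finset ℕ := (Finset.range n).filter (fun k => 2 ^ (2 ^ k) - 1 < n) with hF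
  set f : List Bool → Finset ℕ :=
    fun l => F.filter (fun k => l.getD (2 ^ (2 ^ k) - 1) false = true) with hf
  set P : Set (List Bool) := {l : List Bool | l.length = n ∧
      ∃ X ∈ SparseSeq, ∀ i, (h : i < l.length) → X i = l.get ⟨i, h⟩} with hP
  -- each element of P is determined by which sparse positions < n are true
  have key : ∀ l ∈ P, ∀ i (h : i < l.length),
      l.get ⟨i, h⟩ = true → ∃ k ∈ F, i = 2 ^ (2 ^ k) - 1 := by
    rintro l ⟨hlen, X, hX, hXl⟩ i h ht
    have : X i = true := (hXl i h).trans ht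
    obtain ⟨k, hk⟩ := hX i this
    refine ⟨k, ?_, hk⟩
    have hkl : k < 2 ^ (2 ^ k) - 1 := k_lt_pos k
    simp only [hF, Finset.mem_filter, Finset.mem_range]
    omega
  have hmaps : ∀ l ∈ P, f l ∈ (F.powerset : Finset (Finset ℕ)) := by
    intro l _
    simp [hf, Finset.mem_powerset, Finset.filter_subset]
  have hinj : Set.InjOn f P := by
    intro l1 h1 l2 h2 hfe
    have hl1 : l1.length = n := h1.1
    have hl2 : l2.length = n := h2.1
    apply List.ext_get (by omega)
    intro i hi1 hi2
    by_cases hs : ∃ k ∈ F, i = 2 ^ (2 ^ k) - 1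
    · obtain ⟨k, hk, rfl⟩ := hs
      have e1 : l1.get ⟨_, hi1⟩ = true ↔ k ∈ f l1 := by
        simp only [hf, Finset.mem_filter]
        rw [List.getD_eq_get _ _ ⟨_, hi1⟩]
        constructor
        · intro ht; exact ⟨hk, ht⟩
        · intro ht; exact ht.2
      have e2 : l2.get ⟨_, hi2⟩ = true ↔ k ∈ f l2 := by
        simp only [hf, Finset.mem_filter]
        rw [List.getD_eq_get _ _ ⟨_, hi2⟩]
        constructor
        · intro ht; exact ⟨hk, ht⟩
        · intro ht; exact ht.2
      rw [hfe] at e1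
      rcases Bool.eq_false_or_eq_true (l2.get ⟨_, hi2⟩) with h | h <;>
        rcases Bool.eq_false_or_eq_true (l1.get ⟨_, hi1⟩) with h' | h' <;>
        simp_all
    · -- both must be false: if true, position is sparse hence in F
      have f1 : l1.get ⟨i, hi1⟩ = false := by
        by_contra hc
        have := key l1 h1 i hi1 (by simpa using hc)
        exact hs this
      have f2 : l2.get ⟨i, hi2⟩ = false := by
        by_contra hc
        have := key l2 h2 i hi2 (by simpa using hc)
        exact hs this
      rw [f1, f2]
  have hcard : P.ncard ≤ 2 ^ F.card := by
    have := Set.ncard_le_ncard_of_injOn (t := (↑F.powerset : Set (Finset ℕ))) f hmaps hinj (F.powerset).finite_toSet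
    rwa [Set.ncard_coe_finset, Finset.card_powerset] at this
  refine hcard.trans ?_
  -- 2 ^ F.card ≤ n + 1
  rcases Finset.eq_empty_or_nonempty F with he | hne
  · simp [he]
  · set M := F.max' hne with hM
    have hMF : M ∈ F := F.max'_mem hne
    have hMn : 2 ^ (2 ^ M) - 1 < n := by
      simp only [hF, Finset.mem_filter] at hMF; exact hMF.2
    have hsub : F ⊆ Finset.range (M + 1) := by
      intro x hx
      simp only [Finset.mem_range]
      exact Nat.lt_succ_of_le (F.le_max' x hx)
    have hcardM : F.card ≤ M + 1 := by
      simpa using Finset.card_le_card hsub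
    have h1 : M + 1 ≤ 2 ^ M := Nat.lt_two_pow_self
    have h2 : (2 : ℕ) ^ F.card ≤ 2 ^ (2 ^ M) :=
      Nat.pow_le_pow_right (by norm_num) (hcardM.trans h1)
    have h3 : 1 ≤ 2 ^ (2 ^ M) := Nat.one_le_two_pow
    omega
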